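/- Let $G$ be a chordal graph and let $F_c$ be a leaf of the clique complex $\Delta(G)$ with branches $F_{t_1}, \ldots, F_{t_q}$ ($q \geq 1$). If $G$ is a generalized block graph, then all pairwise intersections among $F_c, F_{t_1}, \ldots, F_{t_q}$ are equal to a common nonempty set $A$, and $A \cap F_l = \emptyset$ for every other maximal clique $F_l$ of $G$; in particular, $A$ is a $(q+1)$-minimal cut set of $G$. -/

import Mathlib

open SimpleGraph Set

/-- Number of connected components of the induced subgraph of `G` on `s`. -/
noncomputable def nc {V : Type*} (G : SimpleGraph V) (s : Set V) : ℕ :=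
  Nat.card (G.induce s).ConnectedComponent

/-- `T` has the cut point property for `G`: every `i ∈ T` is a cut point of the
induced subgraph on `Tᶜ ∪ {i}` (removing `i` increases the number of components). -/
def CutPointProperty {V : Type*} (G : SimpleGraph V) (T : Set V) : Prop :=
  ∀ i ∈ T, nc G (Tᶜ ∪ {i}) < nc G Tᶜ

/-- The join `G₁ * G₂` of two graphs on disjoint vertex sets. -/
def joinGraph {V₁ V₂ : Type*} (G₁ : SimpleGraph V₁) (G₂ : SimpleGraph V₂) :
    SimpleGraph (V₁ ⊕ V₂) where
  Adj v w :=
    match v, w with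
    | Sum.inl a, Sum.inl b => G₁.Adj a b
    | Sum.inr a, Sum.inr b => G₂.Adj a b
    | Sum.inl _, Sum.inr _ => True
    | Sum.inr _, Sum.inl _ => True
  symm := ⟨by rintro (a | a) (b | b) h <;> simp_all <;> exact h.symm⟩
  loopless := ⟨by rintro (a | a) h <;> simp_all⟩

/-- Disjoint union of an indexed family of graphs. -/
def sigmaGraph {ι : Type*} {V : ι → Type*} (G : ∀ i, SimpleGraph (V i)) :
    SimpleGraph (Σ i, V i) where
  Adj v w := ∃ h : v.1 = w.1, (G w.1).Adj (h ▸ v.2) w.2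
  symm := by
    refine ⟨?_⟩
    rintro ⟨i, a⟩ ⟨j, b⟩ ⟨h, hab⟩
    dsimp at h hab ⊢
    subst h
    exact ⟨rfl, hab.symm⟩
  loopless := by
    refine ⟨?_⟩
    rintro ⟨i, a⟩ ⟨h, hab⟩
    dsimp at h hab
    exact (G i).irrefl hab
/-- The corona `H ⊙ H'`: one copy of `H'` for each vertex `v` of `H`,
with every vertex of the copy joined to `v`. -/
def coronaGraph {V₁ V₂ : Type*} (H : SimpleGraph V₁) (H' : SimpleGraph V₂) :
    SimpleGraph (V₁ ⊕ V₁ × V₂) where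
  Adj v w :=
    match v, w with
    | Sum.inl a, Sum.inl b => H.Adj a b
    | Sum.inl a, Sum.inr p => a = p.1
    | Sum.inr p, Sum.inl b => p.1 = b
    | Sum.inr p, Sum.inr q => p.1 = q.1 ∧ H'.Adj p.2 q.2
  symm := by
    refine ⟨?_⟩
    rintro (a | p) (b | q) h <;> dsimp at h ⊢
    · exact h.symm
    · exact h.symm
    · exact h.symm
    · exact ⟨h.1.symm, h.2.symm⟩
  loopless := ⟨by rintro (a | p) h <;> simp_all⟩

/-- The whisker graph `W(H)`: a pendant vertex attached to each vertex of `H`. -/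
def whiskerGraph {V : Type*} (H : SimpleGraph V) : SimpleGraph (V ⊕ V) where
  Adj v w :=
    match v, w with
    | Sum.inl a, Sum.inl b => H.Adj a b
    | Sum.inl a, Sum.inr b => a = b
    | Sum.inr a, Sum.inl b => a = b
    | Sum.inr _, Sum.inr _ => False
  symm := ⟨by rintro (a | a) (b | b) h <;> simp_all; exact h.symm⟩
  loopless := ⟨by rintro (a | a) h <;> simp_all⟩

/-- `F` is (the vertex set of) a maximal clique of `G`. -/
def MaxClique {V : Type*} (G : SimpleGraph V) (F : Set V) : Prop :=
  Maximal G.IsClique F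

/-- A graph is chordal if every cycle of length at least 4 has a chord. -/
def IsChordal {V : Type*} (G : SimpleGraph V) : Prop :=
  ∀ (n : ℕ), 4 ≤ n → ∀ c : ℕ → V, Set.InjOn c (Set.Iio n) →
    (∀ i < n, G.Adj (c i) (c ((i + 1) % n))) →
    ∃ i < n, ∃ j < n, j ≠ i ∧ j ≠ (i + 1) % n ∧ i ≠ (j + 1) % n ∧ G.Adj (c i) (c j)

/-- A generalized block graph: a connected chordal graph in which any three distinct
maximal cliques with nonempty common intersection have all pairwise intersections equal. -/
def GenBlockGraph {V : Type*} (G : SimpleGraph V) : Prop :=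
  G.Connected ∧ IsChordal G ∧
    ∀ F₁ F₂ F₃ : Set V, MaxClique G F₁ → MaxClique G F₂ → MaxClique G F₃ →
      F₁ ≠ F₂ → F₁ ≠ F₃ → F₂ ≠ F₃ → (F₁ ∩ F₂ ∩ F₃).Nonempty →
      F₁ ∩ F₂ = F₁ ∩ F₃ ∧ F₁ ∩ F₂ = F₂ ∩ F₃

/-- `A` is a cut set of `G`: deleting `A` increases the number of connected components. -/
def IsCutSet {V : Type*} (G : SimpleGraph V) (A : Set V) : Prop :=
  nc G Set.univ < nc G Aᶜ

/-- `A` is an inclusion-minimal cut set of `G`. -/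
def IsMinCutSet {V : Type*} (G : SimpleGraph V) (A : Set V) : Prop :=
  IsCutSet G A ∧ ∀ B ⊂ A, ¬ IsCutSet G B

/-- `A` is a `t`-minimal cut set of `G`: a minimal cut set which is the common
intersection of exactly `t` maximal cliques of `G` and disjoint from all other
maximal cliques. -/
def IsTMinCut {V : Type*} (G : SimpleGraph V) (t : ℕ) (A : Set V) : Prop :=
  IsMinCutSet G A ∧
  {F : Set V | MaxClique G F ∧ A ⊆ F}.ncard = t ∧
  ⋂₀ {F : Set V | MaxClique G F ∧ A ⊆ F} = A ∧
  ∀ F : Set V, MaxClique G F → ¬ A ⊆ F → F ∩ A = ∅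

/-- `B` is a branch of the facet `F` in the clique complex of `G`. -/
def IsBranch {V : Type*} (G : SimpleGraph V) (F B : Set V) : Prop :=
  MaxClique G B ∧ B ≠ F ∧ ∀ H : Set V, MaxClique G H → H ≠ F → H ∩ F ⊆ B ∩ F

/-- `F` is a leaf of the clique complex of `G`. -/
def IsLeafClique {V : Type*} (G : SimpleGraph V) (F : Set V) : Prop :=
  MaxClique G F ∧ ((∀ F' : Set V, MaxClique G F' → F' = F) ∨ ∃ B, IsBranch G F B)

section AuxStmt16

variable {V : Type*}

lemma stmt16_pairClique (G : SimpleGraph V) {u z : V} (h : G.Adj u z) :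
    G.IsClique {u, z} := by
  intro p hp q hq hne
  simp only [Set.mem_insert_iff, Set.mem_singleton_iff] at hp hq
  rcases hp with rfl | rfl <;> rcases hq with rfl | rfl
  · exact absurd rfl hne
  · exact h
  · exact h.symm
  · exact absurd rfl hne

lemma stmt16_exists_maxClique [Finite V] (G : SimpleGraph V) {s : Set V}
    (hs : G.IsClique s) : ∃ F : Set V, s ⊆ F ∧ MaxClique G F := by
  obtain ⟨F, hF, hmax⟩ := Finite.exists_le_maximal hs
  exact ⟨F, hF, hmax⟩

lemma stmt16_maxClique_eq {G : SimpleGraph V} {F F' : Set V}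
    (hF : MaxClique G F) (hF' : MaxClique G F') (h : F ⊆ F') : F = F' :=
  h.antisymm (hF.2 hF'.1 h)

lemma stmt16_card_cc_eq_one {G : SimpleGraph V} (h : G.Connected) :
    Nat.card G.ConnectedComponent = 1 := by
  haveI : Nonempty V := h.nonempty
  haveI : Nonempty G.ConnectedComponent := Nonempty.map (G.connectedComponentMk) ‹_›
  haveI : Subsingleton G.ConnectedComponent :=
    ⟨SimpleGraph.ConnectedComponent.ind₂ fun u v =>
      SimpleGraph.ConnectedComponent.sound (h.preconnected u v)⟩
  exact Nat.card_unique

lemma stmt16_nc_univ {G : SimpleGraph V} (h : G.Connected) : nc G Set.univ = 1 := by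
  unfold nc
  rw [Nat.card_congr (SimpleGraph.induceUnivIso G).connectedComponentEquiv]
  exact stmt16_card_cc_eq_one h

lemma stmt16_nc_eq_one {G : SimpleGraph V} {s : Set V}
    (h : (G.induce s).Connected) : nc G s = 1 :=
  stmt16_card_cc_eq_one h

end AuxStmt16

/-- in a generalized block graph, a leaf clique `F_c` together with its
branches `B 0, …, B (q-1)` have all pairwise intersections equal to a common nonempty set
`A`, disjoint from all other maximal cliques; `A` is a `(q+1)`-minimal cut set. -/
theorem stmt16 {V : Type*} [Fintype V] (G : SimpleGraph V)
    (hG : GenBlockGraph G)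
    (Fc : Set V) (hFc : IsLeafClique G Fc)
    (hother : ∃ F : Set V, MaxClique G F ∧ F ≠ Fc)
    {q : ℕ} (hq : 1 ≤ q) (B : Fin q → Set V) (hBinj : Function.Injective B)
    (hBbr : ∀ j, IsBranch G Fc (B j))
    (hBall : ∀ F : Set V, MaxClique G F → F ≠ Fc →
      ((F ∩ Fc).Nonempty ↔ ∃ j, F = B j)) :
    ∃ A : Set V, A.Nonempty ∧
      (∀ j, Fc ∩ B j = A) ∧
      (∀ j k, j ≠ k → B j ∩ B k = A) ∧
      (∀ F : Set V, MaxClique G F → F ≠ Fc → (∀ j, F ≠ B j) → F ∩ A = ∅) ∧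
      IsTMinCut G (q + 1) A := by
  classical
  obtain ⟨hFcmax, -⟩ := hFc
  have hBmax : ∀ j, MaxClique G (B j) := fun j => (hBbr j).1
  have hBne : ∀ j, B j ≠ Fc := fun j => (hBbr j).2.1
  have hBbr' : ∀ j, ∀ H : Set V, MaxClique G H → H ≠ Fc → H ∩ Fc ⊆ B j ∩ Fc :=
    fun j => (hBbr j).2.2
  set j0 : Fin q := ⟨0, hq⟩ with hj0def
  set A : Set V := Fc ∩ B j0 with hAdef
  have hEq1 : ∀ j, Fc ∩ B j = A := by
    intro j
    have h1 := hBbr' j0 (B j) (hBmax j) (hBne j)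
    have h2 := hBbr' j (B j0) (hBmax j0) (hBne j0)
    rw [hAdef, Set.inter_comm Fc (B j), Set.inter_comm Fc (B j0)]
    exact h1.antisymm h2
  have hAFc : A ⊆ Fc := Set.inter_subset_left
  have hAB : ∀ j, A ⊆ B j := fun j => (hEq1 j) ▸ Set.inter_subset_right
  have hAne : A.Nonempty := by
    have h := (hBall (B j0) (hBmax j0) (hBne j0)).2 ⟨j0, rfl⟩
    rwa [Set.inter_comm, ← hAdef] at h
  have hEq2 : ∀ j k, j ≠ k → B j ∩ B k = A := by
    intro j k hjk
    obtain ⟨h1, h2⟩ := hG.2.2 Fc (B j) (B k) hFcmax (hBmax j) (hBmax k)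
      (Ne.symm (hBne j)) (Ne.symm (hBne k)) (fun h => hjk (hBinj h))
      (by rw [hEq1 j, Set.inter_eq_self_of_subset_left (hAB k)]; exact hAne)
    rw [← h2, hEq1 j]
  have hdisj : ∀ F : Set V, MaxClique G F → F ≠ Fc → (∀ j, F ≠ B j) → F ∩ A = ∅ := by
    intro F hF hne hnb
    have h0 : F ∩ Fc = ∅ := by
      rw [← Set.not_nonempty_iff_eq_empty, hBall F hF hne]
      rintro ⟨j, rfl⟩; exact hnb j rfl
    apply Set.eq_empty_of_subset_empty
    calc F ∩ A ⊆ F ∩ Fc := Set.inter_subset_inter_right _ hAFc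
    _ = ∅ := h0
  have hAsub : ∀ F : Set V, MaxClique G F → (F ∩ A).Nonempty → A ⊆ F := by
    intro F hF hne
    by_cases h1 : F = Fc
    · subst h1; exact hAFc
    by_cases h2 : ∃ j, F = B j
    · obtain ⟨j, rfl⟩ := h2; exact hAB j
    · rw [hdisj F hF h1 (fun j hj => h2 ⟨j, hj⟩)] at hne
      exact absurd hne (by simp)
  have hnb : ∀ u z : V, G.Adj u z → z ∈ A → ∀ a ∈ A, u = a ∨ G.Adj u a := by
    intro u z huz hz a ha
    obtain ⟨F, hsub, hF⟩ := stmt16_exists_maxClique G (stmt16_pairClique G huz)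
    have hzF : z ∈ F := hsub (by simp)
    have hAF : A ⊆ F := hAsub F hF ⟨z, hzF, hz⟩
    by_cases h : u = a
    · exact Or.inl h
    · exact Or.inr (hF.1 (hsub (by simp)) (hAF ha) h)
  have hstay : ∀ u z : V, G.Adj u z → u ∈ Fc → u ∉ A → z ∉ A → z ∈ Fc := by
    intro u z huz huFc huA hzA
    by_contra hzFc
    obtain ⟨F, hsub, hF⟩ := stmt16_exists_maxClique G (stmt16_pairClique G huz)
    have hne : F ≠ Fc := fun h => hzFc (h ▸ hsub (by simp))
    obtain ⟨j, rfl⟩ := (hBall F hF hne).1 ⟨u, hsub (by simp), huFc⟩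
    exact huA ((hEq1 j) ▸ (⟨huFc, hsub (by simp)⟩ : u ∈ Fc ∩ B j))
  -- other maximal cliques dirichlet: set of cliques containing A
  have hset : {F : Set V | MaxClique G F ∧ A ⊆ F} = insert Fc (Set.range B) := by
    ext F
    constructor
    · rintro ⟨hF, hAF⟩
      by_cases h1 : F = Fc
      · exact Or.inl h1
      · obtain ⟨w, hw⟩ := hAne
        obtain ⟨j, rfl⟩ := (hBall F hF h1).1 ⟨w, hAF hw, hAFc hw⟩
        exact Or.inr ⟨j, rfl⟩
    · rintro (rfl | ⟨j, rfl⟩)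
      · exact ⟨hFcmax, hAFc⟩
      · exact ⟨hBmax j, hAB j⟩
  have hcard : {F : Set V | MaxClique G F ∧ A ⊆ F}.ncard = q + 1 := by
    rw [hset, Set.ncard_insert_of_notMem (by rintro ⟨j, hj⟩; exact hBne j hj)
      (Set.finite_range B), ← Nat.card_coe_set_eq,
      Nat.card_range_of_injective hBinj, Nat.card_eq_fintype_card, Fintype.card_fin]
  have hsInter : ⋂₀ {F : Set V | MaxClique G F ∧ A ⊆ F} = A := by
    apply subset_antisymm
    · intro w hw
      exact ⟨Set.mem_sInter.mp hw Fc ⟨hFcmax, hAFc⟩,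
        Set.mem_sInter.mp hw (B j0) ⟨hBmax j0, hAB j0⟩⟩
    · exact fun w hw F hF => hF.2 hw
  have ncuniv : nc G Set.univ = 1 := stmt16_nc_univ hG.1
  -- the cut-set property
  have hcut : IsCutSet G A := by
    have hFcnsub : ¬ Fc ⊆ B j0 :=
      fun h => hBne j0 (stmt16_maxClique_eq hFcmax (hBmax j0) h).symm
    obtain ⟨x, hxFc, hxB⟩ := Set.not_subset.mp hFcnsub
    have hxA : x ∉ A := fun h => hxB (hAB j0 h)
    have hBnsub : ¬ B j0 ⊆ Fc :=
      fun h => hBne j0 (stmt16_maxClique_eq (hBmax j0) hFcmax h)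
    obtain ⟨y, hyB, hyFc⟩ := Set.not_subset.mp hBnsub
    have hyA : y ∉ A := fun h => hyFc (hAFc h)
    have hwalkstay : ∀ {u v : ↥(Aᶜ)} (_ : (G.induce Aᶜ).Walk u v),
        u.1 ∈ Fc → v.1 ∈ Fc := by
      intro u v p
      induction p with
      | nil => exact id
      | @cons u w v h p ih =>
        intro hu
        exact ih (hstay u.1 w.1 h hu u.2 w.2)
    haveI : Finite ((G.induce Aᶜ).ConnectedComponent) :=
      Finite.of_surjective ((G.induce Aᶜ).connectedComponentMk) (fun c => c.exists_rep)
    have h2 : Nontrivial ((G.induce Aᶜ).ConnectedComponent) := by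
      refine ⟨(G.induce Aᶜ).connectedComponentMk ⟨x, hxA⟩,
        (G.induce Aᶜ).connectedComponentMk ⟨y, hyA⟩, fun h => ?_⟩
      obtain ⟨p⟩ := SimpleGraph.ConnectedComponent.exact h
      exact hyFc (hwalkstay p hxFc)
    have : 1 < nc G Aᶜ := Finite.one_lt_card_iff_nontrivial.mpr h2
    unfold IsCutSet
    rw [ncuniv]
    exact this
  have hmin : ∀ B' ⊂ A, ¬ IsCutSet G B' := by
    intro B' hB'
    obtain ⟨a, haA, haB'⟩ := Set.exists_of_ssubset hB'
    have hB'A : B' ⊆ A := hB'.1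
    have haB'c : a ∈ B'ᶜ := haB'
    have key : ∀ {x y : V} (_ : G.Walk x y),
        (∀ (hx : x ∈ B'ᶜ) (hy : y ∈ B'ᶜ), (G.induce B'ᶜ).Reachable ⟨x, hx⟩ ⟨y, hy⟩) ∧
        (x ∈ B' → ∀ (ha : a ∈ B'ᶜ) (hy : y ∈ B'ᶜ),
          (G.induce B'ᶜ).Reachable ⟨a, ha⟩ ⟨y, hy⟩) := by
      intro x y p
      induction p with
      | nil =>
        constructor
        · intro hx hy; exact SimpleGraph.Reachable.refl _
        · intro hxB _ hy; exact absurd hxB hy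
      | @cons x z y h p ih =>
        constructor
        · intro hx hy
          by_cases hz : z ∈ B'
          · have hr := ih.2 hz haB'c hy
            rcases hnb x z h (hB'A hz) a haA with rfl | hxa
            · exact hr
            · exact (SimpleGraph.Adj.reachable
                (by exact hxa : (G.induce B'ᶜ).Adj ⟨x, hx⟩ ⟨a, haB'c⟩)).trans hr
          · exact (SimpleGraph.Adj.reachable
              (by exact h : (G.induce B'ᶜ).Adj ⟨x, hx⟩ ⟨z, hz⟩)).trans (ih.1 hz hy)
        · intro hxB ha hy
          by_cases hz : z ∈ B'
          · exact ih.2 hz ha hy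
          · rcases hnb z x h.symm (hB'A hxB) a haA with rfl | hza
            · exact ih.1 hz hy
            · exact (SimpleGraph.Adj.reachable
                (by exact hza.symm : (G.induce B'ᶜ).Adj ⟨a, ha⟩ ⟨z, hz⟩)).trans (ih.1 hz hy)
    have hconn' : (G.induce B'ᶜ).Connected := by
      rw [SimpleGraph.connected_iff]
      refine ⟨fun u v => ?_, ⟨⟨a, haB'c⟩⟩⟩
      obtain ⟨p⟩ := hG.1.preconnected u.1 v.1
      exact (key p).1 u.2 v.2
    intro hcs
    unfold IsCutSet at hcs
    rw [ncuniv, stmt16_nc_eq_one hconn'] at hcs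
    exact lt_irrefl 1 hcs
  refine ⟨A, hAne, hEq1, hEq2, hdisj, ⟨hcut, hmin⟩, hcard, hsInter, ?_⟩
  intro F hF hnsub
  by_contra hne
  exact hnsub (hAsub F hF (Set.nonempty_iff_ne_empty.mpr hne))
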